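/- Let G be a homogeneous transitive torsion-free abelian group. Then every characteristic subgroup of G is fully invariant. -/

import Mathlib

/-- The characteristic (height sequence) of an element: `chi x p n` says `x` is divisible
by `p^n`. -/
def chi {G : Type*} [AddCommGroup G] (x : G) : ℕ → ℕ → Prop :=
  fun p n => ∃ y : G, (p : ℤ) ^ n • y = x

section Aux

variable {G : Type*} [AddCommGroup G]

/-- Divisibility of a group element by a natural number. -/
def dvdG (d : ℕ) (x : G) : Prop := ∃ z : G, (d : ℤ) • z = x

lemma chi_iff_dvdG (x : G) (p n : ℕ) : chi x p n ↔ dvdG (p ^ n) x := by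
  unfold chi dvdG
  constructor
  · rintro ⟨y, hy⟩; exact ⟨y, by push_cast; exact hy⟩
  · rintro ⟨y, hy⟩; exact ⟨y, by push_cast at hy; exact hy⟩

lemma chi_eq_iff (x y : G) : chi x = chi y ↔ ∀ d : ℕ, dvdG d x ↔ dvdG d y := by
  constructor
  · intro h d
    rw [← pow_one d, ← chi_iff_dvdG, ← chi_iff_dvdG, h]
  · intro h
    funext p n
    exact propext ((chi_iff_dvdG x p n).trans (((h (p ^ n)).trans
      (chi_iff_dvdG y p n).symm)))

lemma nsm (a b : ℕ) (v : G) : ((a * b : ℕ) : ℤ) • v = (a : ℤ) • ((b : ℤ) • v) := by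
  rw [smul_smul]; norm_cast

lemma zsm_nsm (a n : ℕ) (v : G) : (a : ℤ) • (n • v) = ((a * n : ℕ) : ℤ) • v := by
  rw [← natCast_zsmul v n, smul_smul]; norm_cast

lemma dvdG_of_dvd {a b : ℕ} (h : a ∣ b) {x : G} (hb : dvdG b x) : dvdG a x := by
  obtain ⟨c, rfl⟩ := h
  obtain ⟨z, hz⟩ := hb
  exact ⟨(c : ℤ) • z, by rw [smul_smul, ← Int.natCast_mul, hz]⟩

/-- Bezout: if `a` is coprime to `b` and `a ∣ b • y` then `a ∣ y`. -/
lemma bez1 {a b : ℕ} (h : Nat.Coprime a b) {y : G}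
    (hd : ∃ z : G, (a : ℤ) • z = (b : ℤ) • y) : dvdG a y := by
  obtain ⟨z, hz⟩ := hd
  set s := Nat.gcdA a b with hs
  set t := Nat.gcdB a b with ht
  have h1 : (1 : ℤ) = a * s + b * t := by
    have h2 := Nat.gcd_eq_gcd_ab a b
    rw [h.gcd_eq_one] at h2
    simpa using h2
  refine ⟨s • y + t • z, ?_⟩
  have : (a : ℤ) • (s • y + t • z) = (a * s) • y + t • ((a : ℤ) • z) := by
    rw [smul_add, smul_smul, smul_smul, smul_smul, mul_comm (a : ℤ) t]
  rw [this, hz, smul_smul, ← add_smul, mul_comm t (b : ℤ), ← h1, one_smul]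

/-- Bezout: if `a` and `b` are coprime and both divide `y`, then `a*b ∣ y`. -/
lemma bez2 {a b : ℕ} (h : Nat.Coprime a b) {y : G}
    (ha : dvdG a y) (hb : dvdG b y) : dvdG (a * b) y := by
  obtain ⟨u, hu⟩ := ha
  obtain ⟨v, hv⟩ := hb
  set s := Nat.gcdA a b with hs
  set t := Nat.gcdB a b with ht
  have h1 : (1 : ℤ) = a * s + b * t := by
    have h2 := Nat.gcd_eq_gcd_ab a b
    rw [h.gcd_eq_one] at h2
    simpa using h2
  refine ⟨s • v + t • u, ?_⟩
  have hab : ((a * b : ℕ) : ℤ) • (s • v + t • u)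
      = (a * s) • ((b : ℤ) • v) + (b * t) • ((a : ℤ) • u) := by
    push_cast
    rw [smul_add, smul_smul, smul_smul, smul_smul, smul_smul]
    ring_nf
  rw [hab, hu, hv, ← add_smul, ← h1, one_smul]

/-- The key arithmetic fact: `d / gcd d (m^d)` is coprime to `m`. -/
lemma cop_aux (d m : ℕ) (hd : 0 < d) (hm : 0 < m) :
    Nat.Coprime (d / Nat.gcd d (m ^ d)) m := by
  set c := Nat.gcd d (m ^ d) with hc
  have hcd : c ∣ d := Nat.gcd_dvd_left _ _
  have hcm : c ∣ m ^ d := Nat.gcd_dvd_right _ _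
  have hc0 : c ≠ 0 := (Nat.gcd_pos_of_pos_left _ hd).ne'
  by_contra hcop
  obtain ⟨p, hp, hpdvd⟩ := Nat.exists_prime_and_dvd hcop
  have hpe : p ∣ d / c := hpdvd.trans (Nat.gcd_dvd_left _ _)
  have hpm : p ∣ m := hpdvd.trans (Nat.gcd_dvd_right _ _)
  have h1 : c * p ∣ d := (Nat.dvd_div_iff_mul_dvd hcd).mp hpe
  have h2 : c * p ∣ m ^ d := by
    have hcp0 : c * p ≠ 0 := Nat.mul_ne_zero hc0 hp.ne_zero
    have hmd0 : m ^ d ≠ 0 := (pow_pos hm d).ne'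
    rw [← Nat.factorization_le_iff_dvd hcp0 hmd0]
    intro q
    rcases eq_or_ne q p with hqp | hq
    · rw [hqp]
      have hle1 : (c * p).factorization p ≤ d.factorization p :=
        (Nat.factorization_le_iff_dvd hcp0 hd.ne').mpr h1 p
      have hle2 : d.factorization p < d := Nat.factorization_lt p hd.ne'
      have hfp : 0 < m.factorization p := hp.factorization_pos_of_dvd hm.ne' hpm
      have hpow : (m ^ d).factorization p = d * m.factorization p := by
        rw [Nat.factorization_pow]; rfl
      rw [hpow]
      calc (c * p).factorization p ≤ d.factorization p := hle1
        _ ≤ d := hle2.le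
        _ = d * 1 := (mul_one d).symm
        _ ≤ d * m.factorization p := Nat.mul_le_mul_left d hfp
    · have hcq : c.factorization q ≤ (m ^ d).factorization q :=
        (Nat.factorization_le_iff_dvd hc0 ((pow_pos hm d).ne')).mpr hcm q
      have heq : (c * p).factorization q = c.factorization q := by
        rw [Nat.factorization_mul hc0 hp.ne_zero, Finsupp.add_apply,
          hp.factorization, Finsupp.single_apply, if_neg (fun h => hq h.symm)]
        omega
      rw [heq]; exact hcq
  have h3 : c * p ∣ c := Nat.dvd_gcd h1 h2
  have := Nat.le_of_dvd (Nat.pos_of_ne_zero hc0) h3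
  nlinarith [hp.two_le, Nat.pos_of_ne_zero hc0]

end Aux

/-- If `G` is a homogeneous transitive torsion-free abelian group, then
every characteristic subgroup of `G` is fully invariant. Homogeneity: any two nonzero
elements have equal types, i.e. suitable nonzero multiples have equal characteristics.
Transitivity: elements with equal characteristics are conjugate under `Aut(G)`. -/
theorem stmt11 {G : Type*} [AddCommGroup G]
    (htf : ∀ (n : ℤ) (x : G), n • x = 0 → n = 0 ∨ x = 0)
    (hhom : ∀ x y : G, x ≠ 0 → y ≠ 0 →
      ∃ k m : ℕ, 0 < k ∧ 0 < m ∧ chi (k • x) = chi (m • y))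
    (htrans : ∀ x y : G, x ≠ 0 → y ≠ 0 → chi x = chi y → ∃ φ : G ≃+ G, φ x = y)
    (H : AddSubgroup G)
    (hH : ∀ φ : G ≃+ G, ∀ x ∈ H, φ x ∈ H) :
    ∀ f : G →+ G, ∀ x ∈ H, f x ∈ H := by
  -- cancellation by a nonzero integer
  have cancel : ∀ (g : ℤ), g ≠ 0 → ∀ a b : G, g • a = g • b → a = b := by
    intro g hg a b h
    have h0 : g • (a - b) = 0 := by rw [smul_sub, h, sub_self]
    rcases htf g (a - b) h0 with h' | h'
    · exact absurd h' hg
    · exact sub_eq_zero.mp h'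
  intro f x hx
  by_cases hx0 : x = 0
  · rw [hx0, map_zero]; exact H.zero_mem
  by_cases hy0 : f x = 0
  · rw [hy0]; exact H.zero_mem
  set y := f x with hy
  obtain ⟨k, m, hk, hm, hkm⟩ := hhom x y hx0 hy0
  set g := Nat.gcd k m with hg
  have hgpos : 0 < g := Nat.gcd_pos_of_pos_left _ hk
  set k' := k / g with hk'
  set m' := m / g with hm'
  have hkk' : k' * g = k := Nat.div_mul_cancel (Nat.gcd_dvd_left _ _)
  have hmm' : m' * g = m := Nat.div_mul_cancel (Nat.gcd_dvd_right _ _)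
  have hk'pos : 0 < k' := by
    rcases Nat.eq_zero_or_pos k' with h | h
    · rw [h, zero_mul] at hkk'; omega
    · exact h
  have hm'pos : 0 < m' := by
    rcases Nat.eq_zero_or_pos m' with h | h
    · rw [h, zero_mul] at hmm'; omega
    · exact h
  have hcop : Nat.Coprime k' m' := Nat.coprime_div_gcd_div_gcd hgpos
  have hD : ∀ d : ℕ, dvdG d (k • x) ↔ dvdG d (m • y) := (chi_eq_iff _ _).mp hkm
  have hgz : (g : ℤ) ≠ 0 := by exact_mod_cast hgpos.ne'
  -- k' • x ≠ 0
  have hkx0 : k' • x ≠ 0 := by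
    intro h
    have h' : (k' : ℤ) • x = 0 := by rwa [natCast_zsmul]
    rcases htf _ _ h' with h'' | h''
    · exact absurd h'' (by exact_mod_cast hk'pos.ne')
    · exact hx0 h''
  -- the key characteristic equality : chi (k' • x) = chi y
  have hkey : chi (k' • x) = chi y := by
    rw [chi_eq_iff]
    intro d
    constructor
    · -- dvdG d (k' • x) → dvdG d y
      intro hd
      rcases Nat.eq_zero_or_pos d with rfl | hdpos
      · obtain ⟨z, hz⟩ := hd
        rw [Nat.cast_zero, zero_smul] at hz
        exact absurd hz.symm hkx0
      -- step A : dvdG d (m' • y) in the sense ∃ u, d • u = m' • y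
      obtain ⟨w, hw⟩ := hd
      have hw' : ((d * g : ℕ) : ℤ) • w = k • x := by
        rw [show d * g = g * d from mul_comm d g, nsm, hw, zsm_nsm g k' x,
          show g * k' = k from by rw [mul_comm]; exact hkk']
        exact natCast_zsmul x k
      obtain ⟨u, hu⟩ := (hD (d * g)).mp ⟨w, hw'⟩
      have hu' : (d : ℤ) • u = (m' : ℤ) • y := by
        apply cancel (g : ℤ) hgz
        rw [← nsm g d u, ← nsm g m' y, show g * d = d * g from mul_comm g d, hu,
          show g * m' = m from by rw [mul_comm]; exact hmm']
        exact (natCast_zsmul y m).symm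
      -- decompose d = c * e
      set c := Nat.gcd d (m' ^ d) with hc
      have hcd : c ∣ d := Nat.gcd_dvd_left _ _
      have hcm : c ∣ m' ^ d := Nat.gcd_dvd_right _ _
      set e := d / c with he
      have hce : c * e = d := Nat.mul_div_cancel' hcd
      have hed : e ∣ d := ⟨c, by rw [← hce]; ring⟩
      have hecop : Nat.Coprime e m' := cop_aux d m' hdpos hm'pos
      -- e divides y
      have hey : dvdG e y := by
        apply bez1 hecop
        obtain ⟨r, hr⟩ := hed
        exact ⟨(r : ℤ) • u, by rw [smul_smul, ← Nat.cast_mul, ← hr, hu']⟩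
      -- c divides x, hence y
      have hck : Nat.Coprime c k' := ((hcop.pow_right d).coprime_dvd_right hcm).symm
      have hcx : dvdG c x := by
        apply bez1 hck
        obtain ⟨r, hr⟩ := hcd
        refine ⟨(r : ℤ) • w, ?_⟩
        rw [smul_smul, ← Nat.cast_mul, ← hr, hw, ← natCast_zsmul x k']
      have hcy : dvdG c y := by
        obtain ⟨z, hz⟩ := hcx
        exact ⟨f z, by rw [← map_zsmul, hz]⟩
      -- combine
      have hec : Nat.Coprime c e := ((hecop.pow_right d).coprime_dvd_right hcm).symm
      have := bez2 hec hcy hey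
      rwa [hce] at this
    · -- dvdG d y → dvdG d (k' • x)
      rintro ⟨z, hz⟩
      have h1 : ((d * m : ℕ) : ℤ) • z = m • y := by
        rw [show d * m = m * d from mul_comm d m, nsm, hz]
        exact natCast_zsmul y m
      obtain ⟨w, hw⟩ := (hD (d * m)).mpr ⟨z, h1⟩
      refine ⟨(m' : ℤ) • w, ?_⟩
      apply cancel (g : ℤ) hgz
      have lhs : (g : ℤ) • ((d : ℤ) • ((m' : ℤ) • w)) = ((d * m : ℕ) : ℤ) • w := by
        rw [← nsm d m' w, ← nsm g (d * m') w,
          show g * (d * m') = d * m from by rw [← hmm']; ring]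
      have rhs : (g : ℤ) • (k' • x) = k • x := by
        rw [zsm_nsm g k' x, show g * k' = k from by rw [mul_comm]; exact hkk']
        exact natCast_zsmul x k
      rw [lhs, rhs]
      exact hw
  obtain ⟨φ, hφ⟩ := htrans (k' • x) y hkx0 hy0 hkey
  have hmem : k' • x ∈ H := H.nsmul_mem hx k'
  have := hH φ _ hmem
  rwa [hφ] at this
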